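/- Let Feat be a set and let F and F' be partial maps from Feat to nonempty closed intervals of ℝ, ordered by the extended subsumption order. Suppose that for every f ∈ dom F ∩ dom F' the intervals F(f) and F'(f) have nonempty intersection. Then the least upper bound F ⊔ F' of F and F' exists and is the partial map G with dom G = dom F ∪ dom F' given by: G(f) = F(f) for f ∈ dom F \ dom F', G(f) = F'(f) for f ∈ dom F' \ dom F, and G(f) = F(f) ∩ F'(f) for f ∈ dom F ∩ dom F'. -/

import Mathlib

/-- A nonempty closed interval of ℝ, given by its endpoints `a ≤ b`. -/
abbrev Ival : Type := {p : ℝ × ℝ // p.1 ≤ p.2}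

/-- The set of reals in the interval. -/
def IccSet (I : Ival) : Set ℝ := Set.Icc I.1.1 I.1.2

/-- The extended subsumption order on partial maps from features to nonempty closed
intervals: `F ≤ G` iff `dom F ⊆ dom G` and `G(f) ⊆ F(f)` for all `f ∈ dom F`. -/
def fsub {Feat : Type*} (F G : Feat → Option Ival) : Prop :=
  (∀ f, F f ≠ none → G f ≠ none) ∧
  ∀ f I J, F f = some I → G f = some J → IccSet J ⊆ IccSet I

/-- if for every shared feature the values of `F` and `F'` overlap, then
the least upper bound `F ⊔ F'` exists and is the partial map `G` with
`dom G = dom F ∪ dom F'` taking the value of the defined map where only one is defined,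
and the intersection of the two intervals on shared features. -/
theorem stmt13 {Feat : Type*} (F F' : Feat → Option Ival)
    (hov : ∀ f I I', F f = some I → F' f = some I' → (IccSet I ∩ IccSet I').Nonempty) :
    ∃ G : Feat → Option Ival,
      -- dom G = dom F ∪ dom F'
      (∀ f, G f ≠ none ↔ (F f ≠ none ∨ F' f ≠ none)) ∧
      -- G agrees with F where only F is defined
      (∀ f I, F f = some I → F' f = none → G f = some I) ∧
      -- G agrees with F' where only F' is defined
      (∀ f I', F' f = some I' → F f = none → G f = some I') ∧
      -- on shared features, G is the intersection of the intervals
      (∀ f I I' J, F f = some I → F' f = some I' → G f = some J →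
        IccSet J = IccSet I ∩ IccSet I') ∧
      -- G is an upper bound
      fsub F G ∧ fsub F' G ∧
      -- G is least among upper bounds
      ∀ H : Feat → Option Ival, fsub F H → fsub F' H → fsub G H := by
  classical
  have key : ∀ f I I', F f = some I → F' f = some I' →
      max I.1.1 I'.1.1 ≤ min I.1.2 I'.1.2 := by
    intro f I I' h1 h2
    have h := hov f I I' h1 h2
    rwa [IccSet, IccSet, Set.Icc_inter_Icc, Set.nonempty_Icc] at h
  have hsetboth : ∀ (I I' : Ival) (h : max I.1.1 I'.1.1 ≤ min I.1.2 I'.1.2),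
      IccSet (⟨(max I.1.1 I'.1.1, min I.1.2 I'.1.2), h⟩ : Ival) = IccSet I ∩ IccSet I' := by
    intro I I' h
    simp [IccSet, Set.Icc_inter_Icc]
  set G : Feat → Option Ival := fun f =>
    match F f, F' f with
    | some I, some I' =>
        if h : max I.1.1 I'.1.1 ≤ min I.1.2 I'.1.2 then
          some ⟨(max I.1.1 I'.1.1, min I.1.2 I'.1.2), h⟩
        else none
    | some I, none => some I
    | none, some I' => some I'
    | none, none => none with hG
  have hGboth : ∀ f I I', F f = some I → F' f = some I' →
      G f ≠ none ∧ ∀ J, G f = some J → IccSet J = IccSet I ∩ IccSet I' := by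
    intro f I I' h1 h2
    have hk := key f I I' h1 h2
    constructor
    · simp only [hG, h1, h2, dif_pos hk]; exact Option.some_ne_none _
    · intro J hJ
      simp only [hG, h1, h2, dif_pos hk] at hJ
      rw [← Option.some.inj hJ]
      exact hsetboth I I' hk
  have hGF : ∀ f I, F f = some I → F' f = none → G f = some I := by
    intro f I h1 h2; simp only [hG, h1, h2]
  have hGF' : ∀ f I', F' f = some I' → F f = none → G f = some I' := by
    intro f I' h1 h2; simp only [hG, h1, h2]
  have hGnone : ∀ f, F f = none → F' f = none → G f = none := by
    intro f h1 h2; simp only [hG, h1, h2]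
  refine ⟨G, ?_, hGF, hGF', ?_, ?_, ?_, ?_⟩
  · intro f
    constructor
    · intro hne
      by_contra hc
      push_neg at hc
      exact hne (hGnone f hc.1 hc.2)
    · rintro (h | h)
      · obtain ⟨I, hI⟩ := Option.ne_none_iff_exists'.mp h
        cases hF' : F' f with
        | none => simp [hGF f I hI hF']
        | some I' => exact (hGboth f I I' hI hF').1
      · obtain ⟨I', hI'⟩ := Option.ne_none_iff_exists'.mp h
        cases hF : F f with
        | none => simp [hGF' f I' hI' hF]
        | some I => exact (hGboth f I I' hF hI').1
  · intro f I I' J h1 h2 h3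
    exact (hGboth f I I' h1 h2).2 J h3
  · constructor
    · intro f hne
      obtain ⟨I, hI⟩ := Option.ne_none_iff_exists'.mp hne
      cases hF' : F' f with
      | none => simp [hGF f I hI hF']
      | some I' => exact (hGboth f I I' hI hF').1
    · intro f I J h1 h2
      cases hF' : F' f with
      | none =>
        rw [hGF f I h1 hF'] at h2
        rw [← Option.some.inj h2]
      | some I' =>
        rw [(hGboth f I I' h1 hF').2 J h2]
        exact Set.inter_subset_left
  · constructor
    · intro f hne
      obtain ⟨I', hI'⟩ := Option.ne_none_iff_exists'.mp hne
      cases hF : F f with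
      | none => simp [hGF' f I' hI' hF]
      | some I => exact (hGboth f I I' hF hI').1
    · intro f I' J h1 h2
      cases hF : F f with
      | none =>
        rw [hGF' f I' h1 hF] at h2
        rw [← Option.some.inj h2]
      | some I =>
        rw [(hGboth f I I' hF h1).2 J h2]
        exact Set.inter_subset_right
  · intro H ⟨hd1, hs1⟩ ⟨hd2, hs2⟩
    constructor
    · intro f hne
      cases hF : F f with
      | some I => exact hd1 f (by simp [hF])
      | none =>
        cases hF' : F' f with
        | some I' => exact hd2 f (by simp [hF'])
        | none => exact absurd (hGnone f hF hF') hne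
    · intro f J K hJ hK
      cases hF : F f with
      | some I =>
        cases hF' : F' f with
        | none =>
          rw [hGF f I hF hF'] at hJ
          rw [← Option.some.inj hJ]
          exact hs1 f I K hF hK
        | some I' =>
          rw [(hGboth f I I' hF hF').2 J hJ]
          exact Set.subset_inter (hs1 f I K hF hK) (hs2 f I' K hF' hK)
      | none =>
        cases hF' : F' f with
        | none => exact absurd hJ (by simp [hGnone f hF hF'])
        | some I' =>
          rw [hGF' f I' hF' hF] at hJ
          rw [← Option.some.inj hJ]
          exact hs2 f I' K hF' hK
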